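/- Let H be a complex Hilbert space, A : H →L[ℂ] H a continuous linear self-adjoint operator, and ψ ∈ H a unit vector. Define f : ℝ → ℝ by f(t) = −ln |⟨ψ, exp(−itA)ψ⟩|². Then f(0) = 0, the first derivative of f at t = 0 vanishes, f′(0) = 0, and one half of the second derivative of f at t = 0 equals the dispersion of A in the state ψ: (1/2)·f″(0) = ⟨ψ, A²ψ⟩ − ⟨ψ, Aψ⟩², i.e. (1/2)·(iteratedDeriv 2 f) 0 = re⟨ψ, A(Aψ)⟩ − (re⟨ψ, Aψ⟩)². -/

import Mathlib

open scoped InnerProductSpace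
open NormedSpace

/-- For `f(t) = -ln |⟨ψ, exp(-itA) ψ⟩|²` with `ψ` a unit vector and `A` bounded
self-adjoint, one has `f(0) = 0`, `f'(0) = 0`, and half the second derivative of `f`
at `0` equals the dispersion `⟨ψ, A²ψ⟩ - ⟨ψ, Aψ⟩²` of `A` in the state `ψ`. -/
theorem geometric_entanglement_derivatives_at_zero
    {H : Type*} [NormedAddCommGroup H] [InnerProductSpace ℂ H] [CompleteSpace H]
    (A : H →L[ℂ] H) (hA : IsSelfAdjoint A) (ψ : H) (hψ : ‖ψ‖ = 1)
    (f : ℝ → ℝ)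
    (hf : ∀ t : ℝ,
      f t = -Real.log
        (‖⟪ψ, (NormedSpace.exp (((-Complex.I) * (t : ℂ)) • A)) ψ⟫_ℂ‖ ^ 2)) :
    f 0 = 0 ∧ deriv f 0 = 0 ∧
      (1 / 2 : ℝ) * iteratedDeriv 2 f 0
        = (⟪ψ, A (A ψ)⟫_ℂ).re - ((⟪ψ, A ψ⟫_ℂ).re) ^ 2 := by
  set B : H →L[ℂ] H := (-Complex.I) • A with hB
  set L : (H →L[ℂ] H) →L[ℂ] ℂ := (innerSL ℂ ψ).comp (ContinuousLinearMap.apply ℂ H ψ)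
    with hL
  have hLapp : ∀ T : H →L[ℂ] H, L T = ⟪ψ, T ψ⟫_ℂ := fun T => rfl
  set E : ℝ → (H →L[ℂ] H) := fun t => exp (t • B) with hEdef
  have hEE : (exp : (H →L[ℂ] H) → _) = exp := rfl
  have hsm : ∀ t : ℝ, ((-Complex.I) * (t : ℂ)) • A = t • B := by
    intro t
    rw [hB, show ((t:ℝ)) • (-Complex.I • A) = ((t:ℂ)) • (-Complex.I • A) from
      (Complex.coe_smul t _).symm, smul_smul]
    rw [mul_comm]
  set g : ℝ → ℂ := fun t => L (E t) with hgdef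
  set g1 : ℝ → ℂ := fun t => L (E t * B) with hg1def
  set g2 : ℝ → ℂ := fun t => L (E t * B * B) with hg2def
  have hE : ∀ t : ℝ, HasDerivAt E (E t * B) t := fun t => hasDerivAt_exp_smul_const B t
  have hg : ∀ t : ℝ, HasDerivAt g (g1 t) t := fun t =>
    (L.restrictScalars ℝ).hasFDerivAt.comp_hasDerivAt t (hE t)
  have hg1 : ∀ t : ℝ, HasDerivAt g1 (g2 t) t := fun t =>
    (L.restrictScalars ℝ).hasFDerivAt.comp_hasDerivAt t ((hE t).mul_const B)
  have hgr : ∀ t : ℝ, HasDerivAt (fun s => (g s).re) (g1 t).re t := fun t =>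
    Complex.reCLM.hasFDerivAt.comp_hasDerivAt t (hg t)
  have hgi : ∀ t : ℝ, HasDerivAt (fun s => (g s).im) (g1 t).im t := fun t =>
    Complex.imCLM.hasFDerivAt.comp_hasDerivAt t (hg t)
  have hg1r : ∀ t : ℝ, HasDerivAt (fun s => (g1 s).re) (g2 t).re t := fun t =>
    Complex.reCLM.hasFDerivAt.comp_hasDerivAt t (hg1 t)
  have hg1i : ∀ t : ℝ, HasDerivAt (fun s => (g1 s).im) (g2 t).im t := fun t =>
    Complex.imCLM.hasFDerivAt.comp_hasDerivAt t (hg1 t)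
  set u : ℝ → ℝ := fun t => (g t).re * (g t).re + (g t).im * (g t).im with hudef
  set u1 : ℝ → ℝ := fun t => 2 * ((g t).re * (g1 t).re + (g t).im * (g1 t).im) with hu1def
  have hu : ∀ t : ℝ, HasDerivAt u (u1 t) t := by
    intro t
    have := ((hgr t).mul (hgr t)).add ((hgi t).mul (hgi t))
    convert this using 1
    case e'_9 => simp [hu1def]; ring
    all_goals rfl
  -- f in terms of u
  have hfu : ∀ t : ℝ, f t = -Real.log (u t) := by
    intro t
    rw [hf t, hsm t]
    congr 2
    rw [Complex.sq_norm, Complex.normSq_apply]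
    simp [hudef, hgdef, hLapp, hEdef, hEE]
  -- values at 0
  have hE0 : E 0 = 1 := by simp [hEdef, exp_zero]
  have hg0 : g 0 = 1 := by
    simp only [hgdef, hE0, hLapp, ContinuousLinearMap.one_apply]
    rw [inner_self_eq_norm_sq_to_K, hψ]; norm_num
  set a : ℂ := ⟪ψ, A ψ⟫_ℂ with ha
  set b : ℂ := ⟪ψ, A (A ψ)⟫_ℂ with hb
  have haim : a.im = 0 := by
    have h1 : (starRingEnd ℂ) a = a := by
      rw [ha, inner_conj_symm]
      exact hA.isSymmetric ψ ψ
    exact Complex.conj_eq_iff_im.mp h1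
  have hg10 : g1 0 = -Complex.I * a := by
    simp only [hg1def, hE0, one_mul, hLapp, hB]
    rw [ContinuousLinearMap.smul_apply, inner_smul_right]
  have hg20 : g2 0 = -b := by
    simp only [hg2def, hE0, one_mul, hLapp, hB]
    rw [ContinuousLinearMap.mul_apply, ContinuousLinearMap.smul_apply,
      ContinuousLinearMap.smul_apply, inner_smul_right, map_smul, inner_smul_right]
    linear_combination (⟪ψ, A (A ψ)⟫_ℂ) * Complex.I_mul_I
  have hgr0 : (g 0).re = 1 := by rw [hg0]; simp
  have hgi0 : (g 0).im = 0 := by rw [hg0]; simp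
  have hg1r0 : (g1 0).re = 0 := by rw [hg10]; simp [haim]
  have hg1i0 : (g1 0).im = -a.re := by rw [hg10]; simp
  have hu0 : u 0 = 1 := by simp [hudef, hgr0, hgi0]
  have hu10 : u1 0 = 0 := by simp [hu1def, hgr0, hgi0, hg1r0]
  -- f 0 = 0
  have hf0 : f 0 = 0 := by rw [hfu 0, hu0, Real.log_one, neg_zero]
  refine ⟨hf0, ?_, ?_⟩
  · have hd : HasDerivAt f (-(u1 0 / u 0)) 0 := by
      have : HasDerivAt (fun t => -Real.log (u t)) (-(u1 0 / u 0)) 0 :=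
        ((hu 0).log (by rw [hu0]; norm_num)).neg
      exact this.congr_of_eventuallyEq (Filter.Eventually.of_forall fun t => (hfu t))
    rw [hd.deriv, hu10, hu0]; norm_num
  · -- second derivative
    have hune : ∀ᶠ t in nhds (0:ℝ), u t ≠ 0 :=
      (hu 0).continuousAt.eventually_ne (by rw [hu0]; norm_num)
    have hdf : deriv f =ᶠ[nhds (0:ℝ)] fun t => -(u1 t / u t) := by
      filter_upwards [hune] with t ht
      have : HasDerivAt f (-(u1 t / u t)) t :=
        (((hu t).log ht).neg).congr_of_eventuallyEq
          (Filter.Eventually.of_forall fun s => (hfu s))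
      exact this.deriv
    set c : ℝ := 2 * ((g1 0).re * (g1 0).re + (g 0).re * (g2 0).re +
      ((g1 0).im * (g1 0).im + (g 0).im * (g2 0).im)) with hc
    have hu1d : HasDerivAt u1 c 0 := by
      have := (((hgr 0).mul (hg1r 0)).add ((hgi 0).mul (hg1i 0))).const_mul (2:ℝ)
      convert this using 1
      all_goals rfl
    have hq : HasDerivAt (fun t => -(u1 t / u t)) (-((c * u 0 - u1 0 * u1 0) / (u 0) ^ 2)) 0 :=
      ((hu1d.div (hu 0) (by rw [hu0]; norm_num)).neg)
    have h2 : iteratedDeriv 2 f 0 = deriv (deriv f) 0 := by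
      rw [iteratedDeriv_succ, iteratedDeriv_one]
    rw [h2, hdf.deriv_eq, hq.deriv, hu0, hu10, hc, hgr0, hgi0, hg1r0, hg1i0, hg20]
    simp
    ring
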